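/- Let α ∈ (0,π), θ ∈ (0,π), and set x = (1+cos θ)/2 ∈ (0,1). Define a = −2(1−cos α)(1−x), b = 4 sin α · √(x(1−x)), c = 2(1−cos α)·x. Then the quadratic polynomial s ↦ a s² + b s + c has the two real roots s₁ = −tan(α/4)·cot(θ/2) and s₂ = cot(α/4)·cot(θ/2) (s₁ ≤ s₂). Moreover s₁ ≤ −1 if and only if θ ≤ α/2, and s₂ ≥ 1 if and only if θ ≤ π − α/2, and s₂ − s₁ = (2/ sin(α/2))·cot(θ/2). -/

import Mathlib

open Real

set_option maxHeartbeats 1000000 in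
theorem quadratic_roots_classifier
    (α θ : ℝ) (hα : α ∈ Set.Ioo 0 Real.pi) (hθ : θ ∈ Set.Ioo 0 Real.pi) :
    let x : ℝ := (1 + Real.cos θ) / 2
    let a : ℝ := -2 * (1 - Real.cos α) * (1 - x)
    let b : ℝ := 4 * Real.sin α * Real.sqrt (x * (1 - x))
    let c : ℝ := 2 * (1 - Real.cos α) * x
    let s₁ : ℝ := -Real.tan (α / 4) * Real.cot (θ / 2)
    let s₂ : ℝ := Real.cot (α / 4) * Real.cot (θ / 2)
    x ∈ Set.Ioo (0 : ℝ) 1 ∧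
    a * s₁ ^ 2 + b * s₁ + c = 0 ∧
    a * s₂ ^ 2 + b * s₂ + c = 0 ∧
    s₁ ≤ s₂ ∧
    (s₁ ≤ -1 ↔ θ ≤ α / 2) ∧
    (1 ≤ s₂ ↔ θ ≤ Real.pi - α / 2) ∧
    s₂ - s₁ = 2 / Real.sin (α / 2) * Real.cot (θ / 2) := by
  obtain ⟨hα0, hαπ⟩ := hα
  obtain ⟨hθ0, hθπ⟩ := hθ
  have hπ := Real.pi_pos
  have hs4 : 0 < Real.sin (α/4) :=
    Real.sin_pos_of_pos_of_lt_pi (by linarith) (by linarith)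
  have hc4 : 0 < Real.cos (α/4) :=
    Real.cos_pos_of_mem_Ioo ⟨by linarith, by linarith⟩
  have hst : 0 < Real.sin (θ/2) :=
    Real.sin_pos_of_pos_of_lt_pi (by linarith) (by linarith)
  have hct : 0 < Real.cos (θ/2) :=
    Real.cos_pos_of_mem_Ioo ⟨by linarith, by linarith⟩
  have hpyθ : Real.sin (θ/2)^2 + Real.cos (θ/2)^2 = 1 := Real.sin_sq_add_cos_sq _
  have hpyα : Real.sin (α/4)^2 + Real.cos (α/4)^2 = 1 := Real.sin_sq_add_cos_sq _
  have hcosθ : Real.cos θ = 2 * Real.cos (θ/2)^2 - 1 := by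
    have := Real.cos_two_mul (θ/2)
    rw [show 2*(θ/2) = θ by ring] at this
    linarith
  have hsinhalf : Real.sin (α/2) = 2 * Real.sin (α/4) * Real.cos (α/4) := by
    have := Real.sin_two_mul (α/4)
    rw [show 2*(α/4) = α/2 by ring] at this
    linarith
  have hcoshalf : Real.cos (α/2) = 1 - 2 * Real.sin (α/4)^2 := by
    have := Real.cos_two_mul (α/4)
    rw [show 2*(α/4) = α/2 by ring] at this
    linear_combination this + 2 * hpyα
  have hsinα : Real.sin α = 4 * Real.sin (α/4) * Real.cos (α/4) * (1 - 2*Real.sin (α/4)^2) := by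
    have := Real.sin_two_mul (α/2)
    rw [show 2*(α/2) = α by ring, hsinhalf, hcoshalf] at this
    linarith [this]
  have hcosα : Real.cos α = 1 - 8 * Real.sin (α/4)^2 * Real.cos (α/4)^2 := by
    have := Real.cos_two_mul (α/2)
    rw [show 2*(α/2) = α by ring, hcoshalf] at this
    linear_combination this + 8 * Real.sin (α/4)^2 * hpyα
  have hx : (1 + Real.cos θ)/2 = Real.cos (θ/2)^2 := by rw [hcosθ]; ring
  have hsqrt : Real.sqrt ((1 + Real.cos θ)/2 * (1 - (1 + Real.cos θ)/2))
      = Real.sin (θ/2) * Real.cos (θ/2) := by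
    rw [hx, show Real.cos (θ/2)^2 * (1 - Real.cos (θ/2)^2)
        = (Real.sin (θ/2) * Real.cos (θ/2))^2 by nlinarith [hpyθ],
      Real.sqrt_sq (by positivity)]
  have htan4 : Real.tan (α/4) = Real.sin (α/4) / Real.cos (α/4) := Real.tan_eq_sin_div_cos _
  have hcot4 : Real.cot (α/4) = Real.cos (α/4) / Real.sin (α/4) := Real.cot_eq_cos_div_sin _
  have hcott : Real.cot (θ/2) = Real.cos (θ/2) / Real.sin (θ/2) := Real.cot_eq_cos_div_sin _
  have htant : Real.tan (θ/2) = Real.sin (θ/2) / Real.cos (θ/2) := Real.tan_eq_sin_div_cos _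
  have hmemθ : θ/2 ∈ Set.Ioo (-(π/2)) (π/2) := ⟨by linarith, by linarith⟩
  have hmemα : α/4 ∈ Set.Ioo (-(π/2)) (π/2) := ⟨by linarith, by linarith⟩
  have hmemα' : π/2 - α/4 ∈ Set.Ioo (-(π/2)) (π/2) := ⟨by linarith, by linarith⟩
  have htanmono1 : Real.tan (θ/2) ≤ Real.tan (α/4) ↔ θ/2 ≤ α/4 :=
    Real.strictMonoOn_tan.le_iff_le hmemθ hmemα
  have htanmono2 : Real.tan (θ/2) ≤ Real.tan (π/2 - α/4) ↔ θ/2 ≤ π/2 - α/4 :=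
    Real.strictMonoOn_tan.le_iff_le hmemθ hmemα'
  refine ⟨⟨by rw [hx]; positivity,
    by nlinarith [hx, hpyθ, mul_pos hst hst]⟩, ?_, ?_, ?_, ?_, ?_, ?_⟩
  · rw [hsqrt, hsinα, hcosα, htan4, hcott, hx]
    field_simp
    linear_combination (16 * Real.sin (α/4)^4 * Real.cos (α/4)^3 * Real.cos (θ/2)^2 * Real.sin (θ/2)) * hpyθ +
      (16 * Real.sin (α/4)^2 * Real.cos (α/4)^3 * Real.cos (θ/2)^2 * Real.sin (θ/2)^3) * hpyα +
      (16 * Real.cos (θ/2)^2 * Real.sin (α/4)^2 * Real.cos (α/4)^2) *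
      ((Real.sin (θ/2)^2 - Real.cos (α/4) * Real.sin (θ/2)^3) * hpyα +
       (Real.sin (α/4)^2 - Real.sin (α/4)^2 * Real.cos (α/4) * Real.sin (θ/2)) * hpyθ)
  · rw [hsqrt, hsinα, hcosα, hcot4, hcott, hx]
    field_simp
    linear_combination (16 * Real.cos (θ/2)^2 * Real.cos (α/4)^2 * Real.sin (α/4)^2) *
      ((Real.sin (α/4) * Real.sin (θ/2)^3 - Real.sin (θ/2)^2) * hpyα +
       (Real.cos (α/4)^2 - Real.cos (α/4)^2 * Real.sin (α/4) * Real.sin (θ/2)) * hpyθ) -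
      (16 * Real.cos (θ/2)^2 * Real.cos (α/4)^2 * Real.sin (α/4)^3 * Real.sin (θ/2)^3) * hpyα +
      (16 * Real.cos (θ/2)^2 * Real.cos (α/4)^4 * Real.sin (α/4)^3 * Real.sin (θ/2)) * hpyθ
  · -- s₁ ≤ s₂
    have h1 : 0 < Real.tan (α/4) * Real.cot (θ/2) := by
      rw [htan4, hcott]; exact mul_pos (div_pos hs4 hc4) (div_pos hct hst)
    have h2 : 0 < Real.cot (α/4) * Real.cot (θ/2) := by
      rw [hcot4, hcott]; exact mul_pos (div_pos hc4 hs4) (div_pos hct hst)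
    nlinarith [h1, h2]
  · -- s₁ ≤ -1 ↔ θ ≤ α/2
    have hkey1 : (-Real.tan (α/4) * Real.cot (θ/2) ≤ -1) ↔ Real.tan (θ/2) ≤ Real.tan (α/4) := by
      rw [htan4, hcott, htant, div_le_div_iff₀ hct hc4,
        show -(Real.sin (α/4)/Real.cos (α/4)) * (Real.cos (θ/2)/Real.sin (θ/2))
          = -((Real.sin (α/4)*Real.cos (θ/2))/(Real.cos (α/4)*Real.sin (θ/2))) by ring,
        neg_le_neg_iff, le_div_iff₀ (by positivity)]
      constructor <;> intro <;> nlinarith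
    rw [hkey1, htanmono1]
    constructor <;> intro <;> linarith
  · -- 1 ≤ s₂ ↔ θ ≤ π - α/2
    have htan4' : Real.tan (π/2 - α/4) = Real.cos (α/4) / Real.sin (α/4) := by
      rw [Real.tan_pi_div_two_sub, htan4, inv_div]
    have hkey2 : (1 ≤ Real.cot (α/4) * Real.cot (θ/2)) ↔ Real.tan (θ/2) ≤ Real.tan (π/2-α/4) := by
      rw [hcot4, hcott, htant, htan4', div_le_div_iff₀ hct hs4,
        show Real.cos (α/4)/Real.sin (α/4) * (Real.cos (θ/2)/Real.sin (θ/2))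
          = (Real.cos (α/4)*Real.cos (θ/2))/(Real.sin (α/4)*Real.sin (θ/2)) by ring,
        le_div_iff₀ (by positivity)]
      constructor <;> intro <;> nlinarith
    rw [hkey2, htanmono2]
    constructor <;> intro <;> linarith
  · -- difference of roots
    rw [hcot4, htan4, hcott, hsinhalf]
    field_simp
    linear_combination hpyα
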